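/- Let Σ ∈ ℝ^{p×p} be symmetric positive definite with condition number λ_max(Σ)/λ_min(Σ) ≤ κ. Then for any nonzero vectors w, w* ∈ ℝ^p, 1 − cos(∠(w, w*)) ≤ κ · {1 − cos(∠(Σ^{1/2}w, Σ^{1/2}w*))}. -/

import Mathlib

open Matrix

noncomputable def l2 {n : ℕ} (x : Fin n → ℝ) : ℝ := Real.sqrt (∑ i, x i ^ 2)

noncomputable def cosAngle {n : ℕ} (x y : Fin n → ℝ) : ℝ := (x ⬝ᵥ y) / (l2 x * l2 y)

lemma l2_nonneg {n : ℕ} (x : Fin n → ℝ) : 0 ≤ l2 x := Real.sqrt_nonneg _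

lemma l2_sq {n : ℕ} (x : Fin n → ℝ) : l2 x ^ 2 = x ⬝ᵥ x := by
  rw [l2, Real.sq_sqrt (by positivity)]
  simp [dotProduct, pow_two]

lemma l2_pos {n : ℕ} {x : Fin n → ℝ} (hx : x ≠ 0) : 0 < l2 x := by
  rcases (l2_nonneg x).lt_or_eq with h | h
  · exact h
  · exfalso
    apply hx
    have h2 : ∑ i, x i ^ 2 = 0 := by
      have := l2_sq x
      rw [← h] at this
      simp [dotProduct, pow_two] at this ⊢
      linarith [this.symm]
    funext i
    have := (Finset.sum_eq_zero_iff_of_nonneg (fun i _ => sq_nonneg (x i))).mp h2 i (Finset.mem_univ i)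
    exact pow_eq_zero_iff (n := 2) (by norm_num) |>.mp this

lemma cauchy {n : ℕ} (x y : Fin n → ℝ) : x ⬝ᵥ y ≤ l2 x * l2 y := by
  have h := Finset.sum_mul_sq_le_sq_mul_sq Finset.univ x y
  have hd : (x ⬝ᵥ y) ^ 2 ≤ (l2 x * l2 y) ^ 2 := by
    rw [mul_pow, l2_sq, l2_sq]
    simpa [dotProduct, pow_two] using h
  nlinarith [mul_nonneg (l2_nonneg x) (l2_nonneg y)]

-- Rayleigh bounds
lemma quad_decomp {p : ℕ} (S : Matrix (Fin p) (Fin p) ℝ) (hS : S.IsHermitian) (z : Fin p → ℝ) :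
    ∃ y : Fin p → ℝ, z ⬝ᵥ (S *ᵥ z) = ∑ i, hS.eigenvalues i * y i ^ 2 ∧ z ⬝ᵥ z = ∑ i, y i ^ 2 := by
  classical
  set U : Matrix (Fin p) (Fin p) ℝ := (hS.eigenvectorUnitary : Matrix (Fin p) (Fin p) ℝ) with hU
  have hstar : star U = Uᵀ := by
    rw [Matrix.star_eq_conjTranspose, conjTranspose_eq_transpose_of_trivial]
  have hUU : U * Uᵀ = 1 := by
    rw [← hstar]
    exact Matrix.mem_unitaryGroup_iff.mp hS.eigenvectorUnitary.2
  refine ⟨Uᵀ *ᵥ z, ?_, ?_⟩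
  · have hspec : S = U * diagonal (RCLike.ofReal ∘ hS.eigenvalues) * Uᵀ := by
      rw [← hstar]; exact hS.spectral_theorem
    conv_lhs => rw [hspec]
    rw [← mulVec_mulVec, ← mulVec_mulVec, dotProduct_mulVec, ← mulVec_transpose]
    simp [mulVec_diagonal, dotProduct, Function.comp, pow_two]
    ring_nf
    congr 1
    funext i
    ring
  · have key : (Uᵀ *ᵥ z) ⬝ᵥ (Uᵀ *ᵥ z) = z ⬝ᵥ z := by
      rw [dotProduct_mulVec, vecMul_transpose, mulVec_mulVec, hUU, one_mulVec]
    rw [← key]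
    simp [dotProduct, pow_two]


lemma quad_lower {p : ℕ} (S : Matrix (Fin p) (Fin p) ℝ) (hS : S.IsHermitian) (m : ℝ)
    (hm : ∀ i, m ≤ hS.eigenvalues i) (z : Fin p → ℝ) (hz : 0 ≤ z ⬝ᵥ z) :
    m * (z ⬝ᵥ z) ≤ z ⬝ᵥ (S *ᵥ z) := by
  obtain ⟨y, h1, h2⟩ := quad_decomp S hS z
  rw [h1, h2, Finset.mul_sum]
  exact Finset.sum_le_sum fun i _ => mul_le_mul_of_nonneg_right (hm i) (sq_nonneg _)

lemma quad_upper {p : ℕ} (S : Matrix (Fin p) (Fin p) ℝ) (hS : S.IsHermitian) (M : ℝ)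
    (hM : ∀ i, hS.eigenvalues i ≤ M) (z : Fin p → ℝ) :
    z ⬝ᵥ (S *ᵥ z) ≤ M * (z ⬝ᵥ z) := by
  obtain ⟨y, h1, h2⟩ := quad_decomp S hS z
  rw [h1, h2, Finset.mul_sum]
  exact Finset.sum_le_sum fun i _ => mul_le_mul_of_nonneg_right (hM i) (sq_nonneg _)

lemma expand_dot {p : ℕ} (c1 c2 : ℝ) (u v : Fin p → ℝ) :
    (c1 • u - c2 • v) ⬝ᵥ (c1 • u - c2 • v) =
      c1 ^ 2 * (u ⬝ᵥ u) + c2 ^ 2 * (v ⬝ᵥ v) - 2 * c1 * c2 * (u ⬝ᵥ v) := by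
  simp [sub_dotProduct, dotProduct_sub, smul_dotProduct, dotProduct_smul, smul_eq_mul,
    dotProduct_comm v u]
  ring

set_option maxHeartbeats 1000000 in
theorem stmt_5 (p : ℕ) (hp : 0 < p) (S : Matrix (Fin p) (Fin p) ℝ) (hS : S.PosDef)
    (κ : ℝ)
    (hκ : Finset.univ.sup' (Finset.univ_nonempty_iff.mpr ⟨⟨0, hp⟩⟩) hS.1.eigenvalues /
          Finset.univ.inf' (Finset.univ_nonempty_iff.mpr ⟨⟨0, hp⟩⟩) hS.1.eigenvalues ≤ κ)
    (w wstar : Fin p → ℝ) (hw : w ≠ 0) (hwstar : wstar ≠ 0) :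
    1 - cosAngle w wstar ≤
      κ * (1 - cosAngle (((hS.posSemidef.1.eigenvectorUnitary : Matrix (Fin p) (Fin p) ℝ) * diagonal ((↑) ∘ (√·) ∘ hS.posSemidef.1.eigenvalues) * (star hS.posSemidef.1.eigenvectorUnitary : Matrix (Fin p) (Fin p) ℝ)) *ᵥ w) (((hS.posSemidef.1.eigenvectorUnitary : Matrix (Fin p) (Fin p) ℝ) * diagonal ((↑) ∘ (√·) ∘ hS.posSemidef.1.eigenvalues) * (star hS.posSemidef.1.eigenvectorUnitary : Matrix (Fin p) (Fin p) ℝ)) *ᵥ wstar)) := by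
  classical
  obtain ⟨A, hAdef⟩ : ∃ A, A = ((hS.posSemidef.1.eigenvectorUnitary : Matrix (Fin p) (Fin p) ℝ) * diagonal ((↑) ∘ (√·) ∘ hS.posSemidef.1.eigenvalues) * (star hS.posSemidef.1.eigenvectorUnitary : Matrix (Fin p) (Fin p) ℝ)) := ⟨_, rfl⟩
  rw [← hAdef]
  have hA : A.IsHermitian := by
    rw [hAdef, Matrix.IsHermitian]
    simp [Matrix.conjTranspose_mul, Matrix.mul_assoc]
    rw [Matrix.star_eq_conjTranspose, conjTranspose_eq_transpose_of_trivial, transpose_transpose]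
  have hAT : Aᵀ = A := by
    rw [← conjTranspose_eq_transpose_of_trivial]; exact hA
  have hAA : A * A = S := by
    rw [hAdef]
    set U := (hS.posSemidef.1.eigenvectorUnitary : Matrix (Fin p) (Fin p) ℝ) with hUdef
    have hUU : star U * U = 1 := Matrix.mem_unitaryGroup_iff'.mp hS.posSemidef.1.eigenvectorUnitary.2
    calc U * diagonal ((↑) ∘ (√·) ∘ hS.posSemidef.1.eigenvalues) * star U *
          (U * diagonal ((↑) ∘ (√·) ∘ hS.posSemidef.1.eigenvalues) * star U)
        = U * (diagonal ((↑) ∘ (√·) ∘ hS.posSemidef.1.eigenvalues) *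
            diagonal ((↑) ∘ (√·) ∘ hS.posSemidef.1.eigenvalues)) * star U := by
          simp only [Matrix.mul_assoc]
          rw [← Matrix.mul_assoc (star U) U, hUU, Matrix.one_mul]
      _ = U * diagonal (RCLike.ofReal ∘ hS.1.eigenvalues) * star U := by
          rw [diagonal_mul_diagonal]
          congr 3
          funext i
          simp [Real.mul_self_sqrt (hS.posSemidef.eigenvalues_nonneg i)]
      _ = S := hS.1.spectral_theorem.symm
  have hST : Sᵀ = S := by
    rw [← conjTranspose_eq_transpose_of_trivial]; exact hS.1
  have key : ∀ z t : Fin p → ℝ, (A *ᵥ z) ⬝ᵥ (A *ᵥ t) = z ⬝ᵥ (S *ᵥ t) := by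
    intro z t
    calc (A *ᵥ z) ⬝ᵥ (A *ᵥ t) = ((A *ᵥ t) ᵥ* A) ⬝ᵥ z := by
          rw [dotProduct_comm, dotProduct_mulVec]
      _ = (Aᵀ *ᵥ (A *ᵥ t)) ⬝ᵥ z := by rw [mulVec_transpose]
      _ = (S *ᵥ t) ⬝ᵥ z := by rw [hAT, mulVec_mulVec, hAA]
      _ = z ⬝ᵥ (S *ᵥ t) := dotProduct_comm _ _
  set a := A *ᵥ w with ha
  set b := A *ᵥ wstar with hb
  have hnw : 0 < l2 w := l2_pos hw
  have hns : 0 < l2 wstar := l2_pos hwstar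
  have hposw : 0 < w ⬝ᵥ (S *ᵥ w) := by simpa using hS.dotProduct_mulVec_pos hw
  have hposs : 0 < wstar ⬝ᵥ (S *ᵥ wstar) := by simpa using hS.dotProduct_mulVec_pos hwstar
  have hna2 : l2 a ^ 2 = w ⬝ᵥ (S *ᵥ w) := by rw [l2_sq, ha, key]
  have hnb2 : l2 b ^ 2 = wstar ⬝ᵥ (S *ᵥ wstar) := by rw [l2_sq, hb, key]
  have hna : 0 < l2 a := by nlinarith [l2_nonneg a, hna2, hposw]
  have hnb : 0 < l2 b := by nlinarith [l2_nonneg b, hnb2, hposs]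
  set m := Finset.univ.inf' (Finset.univ_nonempty_iff.mpr ⟨⟨0, hp⟩⟩) hS.1.eigenvalues with hmdef
  set M := Finset.univ.sup' (Finset.univ_nonempty_iff.mpr ⟨⟨0, hp⟩⟩) hS.1.eigenvalues with hMdef
  have hm_le : ∀ i, m ≤ hS.1.eigenvalues i := fun i => Finset.inf'_le _ (Finset.mem_univ i)
  have hM_ge : ∀ i, hS.1.eigenvalues i ≤ M := fun i => Finset.le_sup' _ (Finset.mem_univ i)
  have hm : 0 < m := by
    rw [hmdef, Finset.lt_inf'_iff]
    exact fun i _ => hS.eigenvalues_pos i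
  have hM : 0 < M := hm.trans_le ((hm_le ⟨0, hp⟩).trans (hM_ge ⟨0, hp⟩))
  have hnaM : l2 a ^ 2 ≤ M * l2 w ^ 2 := by
    rw [hna2, l2_sq]; exact quad_upper S hS.1 M hM_ge w
  have hnbM : l2 b ^ 2 ≤ M * l2 wstar ^ 2 := by
    rw [hnb2, l2_sq]; exact quad_upper S hS.1 M hM_ge wstar
  set z : Fin p → ℝ := l2 b • w - l2 a • wstar with hzdef
  have hAz : A *ᵥ z = l2 b • a - l2 a • b := by
    rw [hzdef, mulVec_sub, mulVec_smul, mulVec_smul]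
  have hzz : z ⬝ᵥ z =
      l2 b ^ 2 * l2 w ^ 2 + l2 a ^ 2 * l2 wstar ^ 2 - 2 * l2 b * l2 a * (w ⬝ᵥ wstar) := by
    rw [hzdef, expand_dot, l2_sq w, l2_sq wstar]
  have hAzz : z ⬝ᵥ (S *ᵥ z) =
      l2 b ^ 2 * l2 a ^ 2 + l2 a ^ 2 * l2 b ^ 2 - 2 * l2 b * l2 a * (a ⬝ᵥ b) := by
    rw [← key z z, hAz, expand_dot, l2_sq a, l2_sq b]
  have hzznn : 0 ≤ z ⬝ᵥ z := by
    rw [show z ⬝ᵥ z = ∑ i, z i ^ 2 from by simp [dotProduct, pow_two]]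
    positivity
  have F3 : m * (l2 b ^ 2 * l2 w ^ 2 + l2 a ^ 2 * l2 wstar ^ 2 - 2 * l2 b * l2 a * (w ⬝ᵥ wstar))
      ≤ l2 b ^ 2 * l2 a ^ 2 + l2 a ^ 2 * l2 b ^ 2 - 2 * l2 b * l2 a * (a ⬝ᵥ b) := by
    rw [← hzz, ← hAzz]; exact quad_lower S hS.1 m hm_le z hzznn
  have stepA : m * (l2 w * l2 wstar - w ⬝ᵥ wstar) ≤ l2 a * l2 b - a ⬝ᵥ b := by
    nlinarith [F3, mul_nonneg hm.le (sq_nonneg (l2 b * l2 w - l2 a * l2 wstar)),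
      mul_pos hna hnb]
  have hDle : 0 ≤ l2 a * l2 b - a ⬝ᵥ b := sub_nonneg.mpr (cauchy a b)
  have h4 : l2 a ^ 2 * l2 b ^ 2 ≤ (M * l2 w ^ 2) * (M * l2 wstar ^ 2) := by
    apply mul_le_mul hnaM hnbM (sq_nonneg _)
    positivity
  have hab : l2 a * l2 b ≤ M * (l2 w * l2 wstar) := by
    nlinarith [h4, mul_pos hM (mul_pos hnw hns), mul_pos hna hnb]
  have hMκ : M ≤ κ * m := (div_le_iff₀ hm).mp hκ
  have c1 := mul_le_mul_of_nonneg_right stepA (mul_pos hna hnb).le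
  have c2 := mul_le_mul_of_nonneg_left hab hDle
  have c3 := mul_le_mul_of_nonneg_left
    (mul_le_mul_of_nonneg_right hMκ (mul_pos hnw hns).le) hDle
  have c4 : m * ((l2 w * l2 wstar - w ⬝ᵥ wstar) * (l2 a * l2 b))
      ≤ m * (κ * (l2 a * l2 b - a ⬝ᵥ b) * (l2 w * l2 wstar)) := by
    nlinarith [c1, c2, c3]
  have goal' : (l2 w * l2 wstar - w ⬝ᵥ wstar) * (l2 a * l2 b)
      ≤ κ * (l2 a * l2 b - a ⬝ᵥ b) * (l2 w * l2 wstar) :=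
    le_of_mul_le_mul_left c4 hm
  have e1 : 1 - cosAngle w wstar = (l2 w * l2 wstar - w ⬝ᵥ wstar) / (l2 w * l2 wstar) := by
    rw [cosAngle]
    field_simp
  have e2 : κ * (1 - cosAngle a b) = κ * (l2 a * l2 b - a ⬝ᵥ b) / (l2 a * l2 b) := by
    rw [cosAngle]
    field_simp
  rw [e1, e2, div_le_div_iff₀ (mul_pos hnw hns) (mul_pos hna hnb)]
  linear_combination goal'
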